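/- Let μ be a doubling measure on ℝ with constant D, let 𝒮 = ⋃ₙ 𝒮ₙ be a levelled family of ternary intervals with 𝒮ₙ of generation gₙ, and suppose the coefficients a_I = (μ(I^r) − μ(I))/μ(I) (where I^r is the right neighbour of I at the same generation) satisfy: for each n ≥ 1, whenever J ∈ 𝒮ₙ and A ∈ ℕ is such that the Riesz density is constant on ternary intervals of length 3^A·|I| for I ∈ 𝒮ₙ₊₁ and 3^A|I| ≤ |J|, then Σ_{I ∈ 𝒮ₙ₊₁, I ⊂ J} |a_I|·μ(I) ≤ (2·3⁻ᴬ + (D+1)·τᴬ)·μ(J), where τ = τ(D) < 1 is the child-decay constant. -/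

import Mathlib

open MeasureTheory Set
open scoped ENNReal

/-- A measure on `ℝ` is doubling with constant `D` (real form, on measures of adjacent
intervals of the same length). -/
def DoublingWithR (μ : Measure ℝ) (D : ℝ) : Prop :=
  ∀ a L : ℝ, 0 < L →
    (μ (Icc a (a + L))).toReal ≤ D * (μ (Icc (a + L) (a + 2 * L))).toReal ∧
    (μ (Icc (a + L) (a + 2 * L))).toReal ≤ D * (μ (Icc a (a + L))).toReal

/-- The ternary interval of generation `n` and index `k`: `[k·3⁻ⁿ, (k+1)·3⁻ⁿ)`. -/
noncomputable def ternary (n : ℕ) (k : ℤ) : Set ℝ :=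
  Ico ((k : ℝ) * (3 : ℝ) ^ (-(n : ℤ))) (((k : ℝ) + 1) * (3 : ℝ) ^ (-(n : ℤ)))

-- no atoms
lemma noAtoms_of_doubling (μ : Measure ℝ) [IsLocallyFiniteMeasure μ] {D : ℝ}
    (hD : 1 ≤ D) (hdbl : DoublingWithR μ D) : NoAtoms μ := by
  constructor
  intro x
  have hfin : ∀ a b : ℝ, μ (Ioc a b) ≠ ∞ := fun a b => measure_Ioc_lt_top.ne
  have key : ∀ k : ℕ, (μ {x}).toReal ≤ D * (μ (Ioc x (x + 2 * (1/2)^(k+1)))).toReal := by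
    intro k
    have hL : (0:ℝ) < (1/2)^(k+1) := by positivity
    have h1 := (hdbl x ((1/2)^(k+1)) hL).1
    have h2 : (μ {x}).toReal ≤ (μ (Icc x (x + (1/2)^(k+1)))).toReal := by
      apply ENNReal.toReal_mono measure_Icc_lt_top.ne
      exact measure_mono (by simp [hL.le])
    refine h2.trans (h1.trans ?_)
    have h3 : (μ (Icc (x + (1/2)^(k+1)) (x + 2 * (1/2)^(k+1)))).toReal
        ≤ (μ (Ioc x (x + 2 * (1/2)^(k+1)))).toReal := by
      apply ENNReal.toReal_mono (hfin _ _)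
      refine measure_mono (fun y hy => ?_)
      simp only [mem_Icc] at hy
      exact ⟨by linarith [hy.1], hy.2⟩
    have hD0 : (0:ℝ) ≤ D := le_trans zero_le_one hD
    exact mul_le_mul_of_nonneg_left h3 hD0
  have htend : Filter.Tendsto (fun k : ℕ => μ (Ioc x (x + 2 * (1/2)^(k+1)))) Filter.atTop
      (nhds (μ (⋂ k : ℕ, Ioc x (x + 2 * (1/2)^(k+1))))) := by
    apply tendsto_measure_iInter_atTop
    · intro k; exact measurableSet_Ioc.nullMeasurableSet
    · intro a b hab
      apply Ioc_subset_Ioc le_rfl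
      have : ((1:ℝ)/2)^(b+1) ≤ (1/2)^(a+1) := by
        apply pow_le_pow_of_le_one (by norm_num) (by norm_num) (by omega)
      linarith
    · exact ⟨0, hfin _ _⟩
  have hempty : (⋂ k : ℕ, Ioc x (x + 2 * (1/2:ℝ)^(k+1))) = ∅ := by
    ext y
    simp only [mem_iInter, mem_Ioc, mem_empty_iff_false, iff_false, not_forall]
    by_contra h
    push_neg at h
    have hy : ∀ k : ℕ, y ≤ x + 2 * (1/2:ℝ)^(k+1) := fun k => (h k).2
    have hx : x < y := (h 0).1
    have hpos : (0:ℝ) < (y - x) / 2 := by linarith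
    obtain ⟨k, hk⟩ := exists_pow_lt_of_lt_one hpos (by norm_num : (1/2:ℝ) < 1)
    have hyk := hy k
    have h2 : (2:ℝ) * (1/2)^(k+1) = (1/2)^k := by ring
    linarith
  rw [hempty] at htend
  simp only [measure_empty] at htend
  have htoReal : Filter.Tendsto (fun k : ℕ => D * (μ (Ioc x (x + 2 * (1/2:ℝ)^(k+1)))).toReal)
      Filter.atTop (nhds (D * (0:ℝ≥0∞).toReal)) := by
    exact ((ENNReal.tendsto_toReal (by simp)).comp htend).const_mul D
  simp only [ENNReal.toReal_zero, mul_zero] at htoReal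
  have hle : (μ {x}).toReal ≤ 0 := ge_of_tendsto htoReal (Filter.Eventually.of_forall key)
  have h0 : (μ {x}).toReal = 0 := le_antisymm hle ENNReal.toReal_nonneg
  have hne : μ {x} ≠ ∞ := by
    apply ne_of_lt
    exact lt_of_le_of_lt (measure_mono (by simp : ({x}:Set ℝ) ⊆ Icc x x)) measure_Icc_lt_top
  exact (ENNReal.toReal_eq_zero_iff _).mp h0 |>.resolve_right hne

-- Int version of sum_Ico_succ_top
lemma int_sum_Ico_succ_top {β : Type*} [AddCommMonoid β] {p q : ℤ} (h : p ≤ q) (f : ℤ → β) :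
    ∑ k ∈ Finset.Ico p (q+1), f k = (∑ k ∈ Finset.Ico p q, f k) + f q := by
  have he : Finset.Ico p (q+1) = insert q (Finset.Ico p q) := by
    ext x; simp only [Finset.mem_Ico, Finset.mem_insert]; omega
  rw [he, Finset.sum_insert (by simp), add_comm]

lemma int_sum_Ico_consecutive {β : Type*} [AddCommMonoid β] {p q r : ℤ} (h1 : p ≤ q) (h2 : q ≤ r)
    (f : ℤ → β) :
    ∑ k ∈ Finset.Ico p r, f k = (∑ k ∈ Finset.Ico p q, f k) + ∑ k ∈ Finset.Ico q r, f k := by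
  rw [← Finset.sum_union, Finset.Ico_union_Ico_eq_Ico h1 h2]
  exact Finset.Ico_disjoint_Ico_consecutive p q r

lemma int_sum_shift {β : Type*} [AddCommMonoid β] (p q : ℤ) (f : ℤ → β) :
    ∑ k ∈ Finset.Ico p q, f (k+1) = ∑ k ∈ Finset.Ico (p+1) (q+1), f k := by
  rw [← Finset.map_add_right_Ico, Finset.sum_map]
  rfl

lemma sum_Ico_measure (μ : Measure ℝ) {δ : ℝ} (hδ : 0 ≤ δ) (p : ℤ) :
    ∀ q : ℤ, p ≤ q →
      ∑ j ∈ Finset.Ico p q, μ (Ico ((j:ℝ)*δ) (((j:ℝ)+1)*δ)) = μ (Ico ((p:ℝ)*δ) ((q:ℝ)*δ)) := by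
  refine Int.le_induction ?_ ?_
  · simp
  · intro q hpq ih
    rw [int_sum_Ico_succ_top hpq, ih]
    have hpq' : (p:ℝ) * δ ≤ (q:ℝ) * δ := by
      apply mul_le_mul_of_nonneg_right _ hδ
      exact_mod_cast hpq
    have hq1 : (q:ℝ) * δ ≤ (q:ℝ) * δ + δ := by linarith
    have hun : Ico ((p:ℝ)*δ) ((q:ℝ)*δ) ∪ Ico ((q:ℝ)*δ) ((q:ℝ)*δ + δ)
        = Ico ((p:ℝ)*δ) ((q:ℝ)*δ + δ) := Ico_union_Ico_eq_Ico hpq' hq1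
    have hdisj : Disjoint (Ico ((p:ℝ)*δ) ((q:ℝ)*δ)) (Ico ((q:ℝ)*δ) ((q:ℝ)*δ + δ)) := by
      rw [Set.Ico_disjoint_Ico]
      simp [le_max_right]
    have := measure_union (μ := μ) hdisj measurableSet_Ico
    rw [hun] at this
    rw [show ((q:ℝ)+1)*δ = (q:ℝ)*δ + δ from by ring,
        show (((q+1:ℤ)):ℝ)*δ = (q:ℝ)*δ + δ from by push_cast; ring]
    exact this.symm

lemma sum_blocks {β : Type*} [AddCommMonoid β] (t : ℤ → β) {Bk : ℤ} (hB : 0 < Bk) (p : ℤ) :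
    ∀ q : ℤ, p ≤ q →
      ∑ k ∈ Finset.Ico (Bk*p) (Bk*q), t k
        = ∑ m ∈ Finset.Ico p q, ∑ k ∈ Finset.Ico (Bk*m) (Bk*(m+1)), t k := by
  refine Int.le_induction ?_ ?_
  · simp
  · intro q hpq ih
    rw [int_sum_Ico_succ_top hpq, ← ih]
    rw [int_sum_Ico_consecutive (q := Bk*q)
      (mul_le_mul_of_nonneg_left hpq hB.le)
      (mul_le_mul_of_nonneg_left (by omega) hB.le) t]

-- splitting a ternary interval into generation n+d descendants
lemma tern_split (μ : Measure ℝ) (n d : ℕ) (m : ℤ) :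
    ∑ k ∈ Finset.Ico ((3:ℤ)^d * m) ((3:ℤ)^d * (m+1)), μ (ternary (n+d) k) = μ (ternary n m) := by
  have h3 : (0:ℝ) ≤ (3:ℝ)^(-((n:ℤ)+d)) := by positivity
  have key : ∀ j : ℤ, (((3:ℤ)^d * j : ℤ):ℝ) * (3:ℝ)^(-((n:ℤ)+d)) = (j:ℝ) * (3:ℝ)^(-(n:ℤ)) := by
    intro j
    push_cast
    rw [mul_comm ((3:ℝ)^d), mul_assoc, ← zpow_natCast (3:ℝ) d,
      ← zpow_add₀ (by norm_num : (3:ℝ) ≠ 0)]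
    congr 2
    ring
  have hle : (3:ℤ)^d * m ≤ (3:ℤ)^d * (m+1) := by
    have : (0:ℤ) < 3^d := by positivity
    nlinarith
  have hs := sum_Ico_measure μ h3 ((3:ℤ)^d * m) ((3:ℤ)^d * (m+1)) hle
  have hcast : ∀ k : ℤ, ternary (n+d) k
      = Ico ((k:ℝ) * (3:ℝ)^(-((n:ℤ)+d))) (((k:ℝ)+1) * (3:ℝ)^(-((n:ℤ)+d))) := by
    intro k
    simp only [ternary]
    norm_num
  have hsum : ∑ k ∈ Finset.Ico ((3:ℤ)^d * m) ((3:ℤ)^d * (m+1)), μ (ternary (n+d) k)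
      = ∑ j ∈ Finset.Ico ((3:ℤ)^d * m) ((3:ℤ)^d * (m+1)),
          μ (Ico ((j:ℝ) * (3:ℝ)^(-((n:ℤ)+d))) (((j:ℝ)+1) * (3:ℝ)^(-((n:ℤ)+d)))) :=
    Finset.sum_congr rfl (fun k _ => by rw [hcast k])
  rw [hsum, hs, key m, key (m+1)]
  simp only [ternary]
  congr 2
  push_cast
  ring_nf

-- iterated child decay
lemma descent (μ : Measure ℝ) {τ : ℝ} (hτ0 : 0 ≤ τ)
    (hchild : ∀ n : ℕ, ∀ k i : ℤ, 0 ≤ i → i < 3 →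
      (μ (ternary (n + 1) (3 * k + i))).toReal ≤ τ * (μ (ternary n k)).toReal) :
    ∀ d : ℕ, ∀ n : ℕ, ∀ m k : ℤ, 3^d * m ≤ k → k < 3^d * (m+1) →
      (μ (ternary (n + d) k)).toReal ≤ τ^d * (μ (ternary n m)).toReal := by
  intro d
  induction d with
  | zero =>
    intro n m k h1 h2
    have : k = m := by omega
    simp [this]
  | succ d ih =>
    intro n m k h1 h2
    have h3d : (0:ℤ) < 3^d := by positivity
    set q : ℤ := k / 3^d with hq
    set r : ℤ := k % 3^d with hr
    have hre : 3^d * q + r = k := Int.mul_ediv_add_emod k (3^d)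
    have hr0 : 0 ≤ r := Int.emod_nonneg k (by positivity)
    have hr1 : r < 3^d := Int.emod_lt_of_pos k h3d
    have hk1 : 3^d * q ≤ k := by omega
    have hk2 : k < 3^d * (q+1) := by
      have : 3^d * (q+1) = 3^d * q + 3^d := by ring
      omega
    have hq1 : 3*m ≤ q := by
      have ha : 3^d * (3*m) ≤ k := by
        rw [show (3:ℤ)^d * (3*m) = 3^(d+1) * m from by rw [pow_succ]; ring]
        exact h1
      have := lt_of_mul_lt_mul_left (lt_of_le_of_lt ha hk2) h3d.le
      omega
    have hq2 : q < 3*(m+1) := by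
      have hb : k < 3^d * (3*(m+1)) := by
        rw [show (3:ℤ)^d * (3*(m+1)) = 3^(d+1) * (m+1) from by rw [pow_succ]; ring]
        exact h2
      exact lt_of_mul_lt_mul_left (lt_of_le_of_lt hk1 hb) h3d.le
    have step1 : (μ (ternary ((n+1) + d) k)).toReal ≤ τ^d * (μ (ternary (n+1) q)).toReal :=
      ih (n+1) q k hk1 hk2
    have step2 : (μ (ternary (n+1) q)).toReal ≤ τ * (μ (ternary n m)).toReal := by
      have := hchild n m (q - 3*m) (by omega) (by omega)
      rwa [show 3*m + (q - 3*m) = q by ring] at this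
    have hrw : n + (d+1) = (n+1) + d := by omega
    rw [hrw]
    calc (μ (ternary ((n+1) + d) k)).toReal ≤ τ^d * (μ (ternary (n+1) q)).toReal := step1
      _ ≤ τ^d * (τ * (μ (ternary n m)).toReal) :=
          mul_le_mul_of_nonneg_left step2 (pow_nonneg hτ0 d)
      _ = τ^(d+1) * (μ (ternary n m)).toReal := by ring

-- doubling for adjacent ternary intervals
lemma adj_le (μ : Measure ℝ) [NullSingletonClass μ] {D : ℝ}
    (hdbl : DoublingWithR μ D) (N : ℕ) (k : ℤ) :
    (μ (ternary N (k+1))).toReal ≤ D * (μ (ternary N k)).toReal := by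
  set δ : ℝ := (3:ℝ)^(-(N:ℤ)) with hδdef
  have hδ : 0 < δ := by positivity
  have h := (hdbl ((k:ℝ) * δ) δ hδ).2
  have e1 : μ (Icc ((k:ℝ)*δ) ((k:ℝ)*δ + δ)) = μ (ternary N k) := by
    rw [← measure_congr (Ico_ae_eq_Icc (μ := μ))]
    simp only [ternary]
    congr 2
    ring
  have e2 : μ (Icc ((k:ℝ)*δ + δ) ((k:ℝ)*δ + 2*δ)) = μ (ternary N (k+1)) := by
    rw [← measure_congr (Ico_ae_eq_Icc (μ := μ))]
    simp only [ternary]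
    congr 2 <;> push_cast <;> ring
  rw [e1, e2] at h
  exact h


/-- One-level Carleson estimate: let `μ` be `D`-doubling with ternary child-decay
constant `τ < 1`, let `𝒮ₙ` consist of the ternary intervals of generation `g n`, and
suppose the density of `μ` is constant on ternary intervals of generation `g (n+1) - A`
(i.e. all `3^A` ternary descendants of generation `g (n+1)` of such an interval have equal
measure), with `g n + A ≤ g (n+1)`.  Then for every `J ∈ 𝒮ₙ`,
`Σ_{I ∈ 𝒮ₙ₊₁, I ⊆ J} |μ(Iʳ) − μ(I)| ≤ (2·3⁻ᴬ + (D+1)·τᴬ)·μ(J)`. -/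
theorem stmt5 (μ : Measure ℝ) [IsLocallyFiniteMeasure μ] (D τ : ℝ)
    (hD : 1 ≤ D) (hτ0 : 0 ≤ τ) (hτ1 : τ < 1)
    (hdbl : DoublingWithR μ D)
    (hchild : ∀ n : ℕ, ∀ k i : ℤ, 0 ≤ i → i < 3 →
      (μ (ternary (n + 1) (3 * k + i))).toReal ≤ τ * (μ (ternary n k)).toReal)
    (g : ℕ → ℕ) (hg : StrictMono g) (n A : ℕ) (hA : g n + A ≤ g (n + 1))
    (hconst : ∀ k i : ℤ, 0 ≤ i → i < 3 ^ A →
      μ (ternary (g (n + 1)) (3 ^ A * k + i)) = μ (ternary (g (n + 1)) (3 ^ A * k)))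
    (kJ : ℤ) :
    ∑ k ∈ Finset.Ico (kJ * 3 ^ (g (n + 1) - g n)) ((kJ + 1) * 3 ^ (g (n + 1) - g n)),
        |(μ (ternary (g (n + 1)) (k + 1))).toReal - (μ (ternary (g (n + 1)) k)).toReal|
      ≤ (2 * (3 : ℝ) ^ (-(A : ℤ)) + (D + 1) * τ ^ A) * (μ (ternary (g n) kJ)).toReal := by
  haveI : NullSingletonClass μ := noAtoms_of_doubling μ hD hdbl
  have hgn : g n < g (n + 1) := hg (Nat.lt_succ_self n)
  -- notation
  set N : ℕ := g (n + 1) with hN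
  set G : ℕ := g (n + 1) - g n with hG
  have hGgn : g n + G = N := by omega
  have hAG : A ≤ G := by omega
  set Bn : ℕ := G - A with hBn
  have hGAB : G = A + Bn := by omega
  set N' : ℕ := N - A with hN'
  have hN'A : N' + A = N := by omega
  have hN'B : g n + Bn = N' := by omega
  have h3A : (0:ℤ) < 3 ^ A := by positivity
  have h3B : (0:ℤ) < 3 ^ Bn := by positivity
  have hfinite : ∀ (M : ℕ) (k : ℤ), μ (ternary M k) ≠ ∞ := by
    intro M k; simp only [ternary]; exact measure_Ico_lt_top.ne
  set f : ℤ → ℝ := fun k => (μ (ternary N k)).toReal with hf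
  have hf0 : ∀ k, 0 ≤ f k := fun k => ENNReal.toReal_nonneg
  set c : ℤ → ℝ := fun m => f (3 ^ A * m) with hc
  have hc0 : ∀ m, 0 ≤ c m := fun m => hf0 _
  set b : ℤ → ℝ := fun m => (μ (ternary N' m)).toReal with hb
  have hb0 : ∀ m, 0 ≤ b m := fun m => ENNReal.toReal_nonneg
  set p : ℤ := 3 ^ Bn * kJ with hp
  set q : ℤ := 3 ^ Bn * (kJ + 1) with hq
  have hpq : p < q := by
    have : p + 3 ^ Bn = q := by rw [hp, hq]; ring
    omega
  set μJ : ℝ := (μ (ternary (g n) kJ)).toReal with hμJ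
  have hμJ0 : 0 ≤ μJ := ENNReal.toReal_nonneg
  -- constancy on blocks
  have hconst' : ∀ m k : ℤ, 3 ^ A * m ≤ k → k < 3 ^ A * (m + 1) → f k = c m := by
    intro m k h1 h2
    have h2' : k < 3 ^ A * m + 3 ^ A := by
      have : 3 ^ A * (m + 1) = 3 ^ A * m + 3 ^ A := by ring
      omega
    have := hconst m (k - 3 ^ A * m) (by omega) (by omega)
    rw [show 3 ^ A * m + (k - 3 ^ A * m) = k by ring] at this
    simp only [hf, hc, this]
  -- block sums of f equal b
  have hbf : ∀ m : ℤ, b m = ∑ k ∈ Finset.Ico (3 ^ A * m) (3 ^ A * (m + 1)), f k := by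
    intro m
    have := tern_split μ N' A m
    rw [hN'A] at this
    rw [hb]
    simp only [← this]
    rw [ENNReal.toReal_sum (fun k _ => hfinite N k)]
  -- b m = 3^A * c m
  have hbc : ∀ m : ℤ, b m = (3:ℝ) ^ A * c m := by
    intro m
    rw [hbf m]
    have hcard : (Finset.Ico (3 ^ A * m) (3 ^ A * (m + 1))).card = 3 ^ A := by
      rw [Int.card_Ico]
      have : (3:ℤ) ^ A * (m + 1) - 3 ^ A * m = 3 ^ A := by ring
      rw [this, show (3:ℤ)^A = ((3^A : ℕ) : ℤ) by push_cast; ring, Int.toNat_natCast]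
    rw [Finset.sum_congr rfl (fun k hk => by
      simp only [Finset.mem_Ico] at hk
      exact hconst' m k hk.1 hk.2)]
    rw [Finset.sum_const, hcard, nsmul_eq_mul]
    push_cast
    ring
  have hcb : ∀ m : ℤ, c m = ((3:ℝ) ^ A)⁻¹ * b m := by
    intro m
    rw [hbc m]
    field_simp
  -- total: sum of b over Ico p q is μJ
  have hbsum : ∑ m ∈ Finset.Ico p q, b m = μJ := by
    have := tern_split μ (g n) Bn kJ
    rw [hN'B] at this
    rw [hμJ, ← this, ENNReal.toReal_sum (fun k _ => hfinite N' k)]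
  -- inner sums
  have hinner : ∀ m : ℤ,
      ∑ k ∈ Finset.Ico (3 ^ A * m) (3 ^ A * (m + 1)), |f (k + 1) - f k| = |c (m + 1) - c m| := by
    intro m
    have hmem : 3 ^ A * (m + 1) - 1 ∈ Finset.Ico ((3:ℤ) ^ A * m) (3 ^ A * (m + 1)) := by
      simp only [Finset.mem_Ico]
      have : 3 ^ A * (m + 1) = 3 ^ A * m + 3 ^ A := by ring
      omega
    rw [Finset.sum_eq_single_of_mem _ hmem ?_]
    · rw [show 3 ^ A * (m + 1) - 1 + 1 = 3 ^ A * (m + 1) by ring]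
      have e1 : f (3 ^ A * (m + 1)) = c (m + 1) := rfl
      have e2 : f (3 ^ A * (m + 1) - 1) = c m := by
        apply hconst' m
        · have : 3 ^ A * (m + 1) = 3 ^ A * m + 3 ^ A := by ring
          omega
        · omega
      rw [e1, e2]
    · intro k hk hkne
      simp only [Finset.mem_Ico] at hk
      have e1 : f k = c m := hconst' m k hk.1 hk.2
      have e2 : f (k + 1) = c m := by
        apply hconst' m
        · omega
        · omega
      rw [e1, e2, sub_self, abs_zero]
  -- rewrite goal sum as sum over blocks
  have hrange1 : kJ * 3 ^ G = 3 ^ A * p := by rw [hp, hGAB]; push_cast; ring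
  have hrange2 : (kJ + 1) * 3 ^ G = 3 ^ A * q := by rw [hq, hGAB]; push_cast; ring
  have hblocks :
      ∑ k ∈ Finset.Ico (kJ * 3 ^ G) ((kJ + 1) * 3 ^ G), |f (k + 1) - f k|
        = ∑ m ∈ Finset.Ico p q, |c (m + 1) - c m| := by
    rw [hrange1, hrange2, sum_blocks (fun k => |f (k + 1) - f k|) h3A p q hpq.le]
    exact Finset.sum_congr rfl (fun m _ => hinner m)
  -- split off top term
  have hsplit :
      ∑ m ∈ Finset.Ico p q, |c (m + 1) - c m|
        = (∑ m ∈ Finset.Ico p (q - 1), |c (m + 1) - c m|) + |c q - c (q - 1)| := by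
    have h1 : p ≤ q - 1 := by omega
    have := int_sum_Ico_succ_top h1 (fun m => |c (m + 1) - c m|)
    rw [show q - 1 + 1 = q by ring] at this
    exact this
  -- bound interior
  have hsub1 : ∑ m ∈ Finset.Ico p (q - 1), b m ≤ μJ := by
    rw [← hbsum]
    apply Finset.sum_le_sum_of_subset_of_nonneg
    · apply Finset.Ico_subset_Ico le_rfl (by omega)
    · intro m _ _; exact hb0 m
  have hsub2 : ∑ m ∈ Finset.Ico p (q - 1), b (m + 1) ≤ μJ := by
    rw [int_sum_shift p (q - 1) b, show q - 1 + 1 = q by ring, ← hbsum]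
    apply Finset.sum_le_sum_of_subset_of_nonneg
    · apply Finset.Ico_subset_Ico (by omega) le_rfl
    · intro m _ _; exact hb0 m
  have h3Ainv : (0:ℝ) < ((3:ℝ) ^ A)⁻¹ := by positivity
  have hinterior : ∑ m ∈ Finset.Ico p (q - 1), |c (m + 1) - c m|
      ≤ 2 * ((3:ℝ) ^ A)⁻¹ * μJ := by
    calc ∑ m ∈ Finset.Ico p (q - 1), |c (m + 1) - c m|
        ≤ ∑ m ∈ Finset.Ico p (q - 1), (c (m + 1) + c m) := by
          apply Finset.sum_le_sum
          intro m _
          calc |c (m + 1) - c m| ≤ |c (m + 1)| + |c m| := abs_sub _ _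
            _ = c (m + 1) + c m := by rw [abs_of_nonneg (hc0 _), abs_of_nonneg (hc0 _)]
      _ = ((3:ℝ) ^ A)⁻¹ * ((∑ m ∈ Finset.Ico p (q - 1), b (m + 1))
            + ∑ m ∈ Finset.Ico p (q - 1), b m) := by
          rw [Finset.sum_add_distrib, mul_add, Finset.mul_sum, Finset.mul_sum]
          congr 1
          · exact Finset.sum_congr rfl (fun m _ => by rw [hcb, add_comm])
          · exact Finset.sum_congr rfl (fun m _ => by rw [hcb])
      _ ≤ ((3:ℝ) ^ A)⁻¹ * (μJ + μJ) := by
          apply mul_le_mul_of_nonneg_left _ h3Ainv.le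
          linarith
      _ = 2 * ((3:ℝ) ^ A)⁻¹ * μJ := by ring
  -- bound top term
  have hbq1 : b (q - 1) ≤ μJ := by
    rw [← hbsum]
    apply Finset.single_le_sum (fun m _ => hb0 m)
    simp only [Finset.mem_Ico]; omega
  have hcq1 : c (q - 1) ≤ τ ^ A * μJ := by
    have hd := descent μ hτ0 hchild A N' (q - 1) (3 ^ A * (q - 1)) le_rfl
      (by nlinarith)
    rw [hN'A] at hd
    calc c (q - 1) ≤ τ ^ A * b (q - 1) := hd
      _ ≤ τ ^ A * μJ := mul_le_mul_of_nonneg_left hbq1 (pow_nonneg hτ0 A)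
  have hcq : c q ≤ D * (τ ^ A * μJ) := by
    have hadj := adj_le μ hdbl N (3 ^ A * q - 1)
    rw [show 3 ^ A * q - 1 + 1 = 3 ^ A * q by ring] at hadj
    have e2 : f (3 ^ A * q - 1) = c (q - 1) := by
      apply hconst' (q - 1)
      · have : 3 ^ A * q = 3 ^ A * (q - 1) + 3 ^ A := by ring
        omega
      · have : 3 ^ A * (q - 1 + 1) = 3 ^ A * q := by ring
        omega
    calc c q ≤ D * f (3 ^ A * q - 1) := hadj
      _ = D * c (q - 1) := by rw [e2]
      _ ≤ D * (τ ^ A * μJ) := mul_le_mul_of_nonneg_left hcq1 (by linarith)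
  have htop : |c q - c (q - 1)| ≤ (D + 1) * τ ^ A * μJ := by
    have := abs_sub (c q) (c (q - 1))
    rw [abs_of_nonneg (hc0 q), abs_of_nonneg (hc0 (q - 1))] at this
    calc |c q - c (q - 1)| ≤ c q + c (q - 1) := this
      _ ≤ D * (τ ^ A * μJ) + τ ^ A * μJ := add_le_add hcq hcq1
      _ = (D + 1) * τ ^ A * μJ := by ring
  -- conclude
  have hzpow : (3:ℝ) ^ (-(A:ℤ)) = ((3:ℝ) ^ A)⁻¹ := by
    rw [zpow_neg, zpow_natCast]
  rw [hblocks, hsplit, hzpow]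
  calc (∑ m ∈ Finset.Ico p (q - 1), |c (m + 1) - c m|) + |c q - c (q - 1)|
      ≤ 2 * ((3:ℝ) ^ A)⁻¹ * μJ + (D + 1) * τ ^ A * μJ := add_le_add hinterior htop
    _ = (2 * ((3:ℝ) ^ A)⁻¹ + (D + 1) * τ ^ A) * μJ := by ring
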